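/- Let G be a group acting faithfully on a set S. The set SV_G of all homeomorphisms of 𝔠^S that are piecewise twist homeomorphisms (with respect to finite cone partitions) is a subgroup of the group of homeomorphisms of 𝔠^S: it contains the identity and is closed under composition and inversion. -/

import Mathlib

open Function Set Pointwise

/-- The Cantor set `𝔠 = ℕ → Bool`, with the product topology. -/
abbrev Cantor : Type := ℕ → Bool

/-- The space `𝔠^S` of functions `S → 𝔠`, with the product topology. -/
abbrev CantorPow (S : Type*) : Type _ := S → Cantor

/-- Prepend a finite string of bits to an infinite sequence of bits. -/
def prepend (l : List Bool) (x : Cantor) : Cantor :=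
  fun n => if h : n < l.length then l.get ⟨n, h⟩ else x (n - l.length)

/-- A prefix function: finitely supported assignment of finite binary strings. -/
def IsPrefixFun {S : Type*} (ψ : S → List Bool) : Prop :=
  {s | ψ s ≠ []}.Finite

/-- The canonical map `h_ψ : 𝔠^S → 𝔠^S` with image the cone `B(ψ)`. -/
def canonMap {S : Type*} (ψ : S → List Bool) : CantorPow S → CantorPow S :=
  fun κ s => prepend (ψ s) (κ s)

/-- The cone `B(ψ)`: all `κ` such that `ψ s` is an initial segment of `κ s` for all `s`. -/
def Cone {S : Type*} (ψ : S → List Bool) : Set (CantorPow S) :=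
  {κ | ∀ s, ∀ i : Fin (ψ s).length, κ s i = (ψ s).get i}

/-- Deleting the prefixes `ψ s`; on `B(ψ)` this is the inverse of `canonMap ψ`. -/
def dropPrefix {S : Type*} (ψ : S → List Bool) : CantorPow S → CantorPow S :=
  fun κ s n => κ s (n + (ψ s).length)

/-- The basic twist map `τ_γ`, given by `τ_γ(κ)(s) = κ(γ⁻¹ • s)`. -/
def twist {G : Type*} (S : Type*) [Group G] [MulAction G S] (γ : G) :
    CantorPow S → CantorPow S :=
  fun κ s => κ (γ⁻¹ • s)

/-- The twist homeomorphism `h_ψ ∘ τ_γ ∘ h_φ⁻¹ : B(φ) → B(ψ)`, as a globally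
defined function (its restriction to `B(φ)` is the twist homeomorphism). -/
def twistMap {G S : Type*} [Group G] [MulAction G S]
    (φ ψ : S → List Bool) (γ : G) : CantorPow S → CantorPow S :=
  canonMap ψ ∘ twist S γ ∘ dropPrefix φ

/-- A partition of `𝔠^S` into finitely many cones. -/
def IsConePartition {S : Type*} {n : ℕ} (φ : Fin n → S → List Bool) : Prop :=
  (∀ i, IsPrefixFun (φ i)) ∧
  (Pairwise fun i j => Disjoint (Cone (φ i)) (Cone (φ j))) ∧
  (⋃ i, Cone (φ i)) = Set.univ

/-- The group structure on self-homeomorphisms, with `(f * g) x = f (g x)`. -/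
instance Homeomorph.instGroup' {α : Type*} [TopologicalSpace α] : Group (α ≃ₜ α) where
  mul f g := g.trans f
  one := Homeomorph.refl α
  inv := Homeomorph.symm
  mul_assoc _ _ _ := rfl
  one_mul _ := rfl
  mul_one _ := rfl
  inv_mul_cancel f := Homeomorph.ext fun x => f.symm_apply_apply x

/-- Membership in the twisted Brin–Thompson group `SV_G`: `f` is a piecewise
twist homeomorphism with respect to finite cone partitions. -/
def InTwistedBT (G : Type*) {S : Type*} [Group G] [MulAction G S]
    (f : CantorPow S ≃ₜ CantorPow S) : Prop :=
  ∃ (n : ℕ) (φ ψ : Fin n → S → List Bool) (γ : Fin n → G),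
    IsConePartition φ ∧ IsConePartition ψ ∧
    ∀ i, Set.EqOn f (twistMap (φ i) (ψ i) (γ i)) (Cone (φ i))

/-- A group is finitely presented if it is the quotient of a finitely generated
free group by the normal closure of finitely many relators. -/
def IsFinitelyPresentedGroup (Γ : Type*) [Group Γ] : Prop :=
  ∃ (n : ℕ) (R : Set (FreeGroup (Fin n))), R.Finite ∧
    Nonempty (Γ ≃* FreeGroup (Fin n) ⧸ Subgroup.normalClosure R)

/-- An action is oligomorphic if for each `k ≥ 1` there are finitely many orbits
of `k`-element subsets. -/
def IsOligomorphic (G S : Type*) [Group G] [MulAction G S] : Prop :=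
  ∀ k : ℕ, 1 ≤ k → ∃ F : Finset (Set S),
    ∀ T : Set S, T.Finite → T.ncard = k → ∃ T₀ ∈ F, ∃ g : G, g • T = T₀

/-- The word metric with respect to a generating set `A`. -/
noncomputable def wordDist {Γ : Type*} [Group Γ] (A : Set Γ) (g h : Γ) : ℕ :=
  sInf {n | ∃ l : List Γ, l.length = n ∧ (∀ x ∈ l, x ∈ A ∨ x⁻¹ ∈ A) ∧ l.prod = g⁻¹ * h}

/-- A quasi-isometric embedding with respect to `ℕ`-valued metrics. -/
def IsQIEmbedding {X Y : Type*} (dX : X → X → ℕ) (dY : Y → Y → ℕ) (f : X → Y) : Prop :=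
  ∃ C D : ℝ, 1 ≤ C ∧ 0 ≤ D ∧ ∀ x y : X,
    (dX x y : ℝ) / C - D ≤ (dY (f x) (f y) : ℝ) ∧
    (dY (f x) (f y) : ℝ) ≤ C * (dX x y : ℝ) + D

section TwistAux

variable {G : Type*} {S : Type*} [Group G] [MulAction G S]

lemma prepend_nil (x : Cantor) : prepend [] x = x := by
  funext n; simp [prepend]

lemma prepend_append (a b : List Bool) (x : Cantor) :
    prepend (a ++ b) x = prepend a (prepend b x) := by
  funext n
  simp only [prepend, List.length_append, List.get_eq_getElem]
  rcases lt_or_ge n a.length with h | h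
  · rw [dif_pos (show n < a.length + b.length by omega), dif_pos h,
      List.getElem_append_left h]
  · rw [dif_neg (show ¬ n < a.length by omega)]
    rcases lt_or_ge (n - a.length) b.length with h2 | h2
    · rw [dif_pos (show n < a.length + b.length by omega), dif_pos h2,
        List.getElem_append_right h]
    · rw [dif_neg (show ¬ n < a.length + b.length by omega),
        dif_neg (show ¬ n - a.length < b.length by omega)]
      congr 1; omega

lemma prepend_add (a : List Bool) (x : Cantor) (n : ℕ) :
    prepend a x (n + a.length) = x n := by
  simp [prepend]

lemma dropPrefix_canonMap (ψ : S → List Bool) (x : CantorPow S) :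
    dropPrefix ψ (canonMap ψ x) = x := by
  funext s n; simp [dropPrefix, canonMap, prepend_add]

lemma canonMap_mem_cone (ψ : S → List Bool) (x : CantorPow S) :
    canonMap ψ x ∈ Cone ψ := by
  intro s i
  simp [canonMap, prepend, i.isLt]

lemma mem_cone_iff {ψ : S → List Bool} {κ : CantorPow S} :
    κ ∈ Cone ψ ↔ ∃ x, κ = canonMap ψ x := by
  constructor
  · intro h
    refine ⟨dropPrefix ψ κ, ?_⟩
    funext s n
    by_cases hn : n < (ψ s).length
    · rw [h s ⟨n, hn⟩]
      simp [canonMap, prepend, hn, dropPrefix]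
    · simp only [canonMap, prepend, dif_neg hn, dropPrefix]
      congr 1; omega
  · rintro ⟨x, rfl⟩; exact canonMap_mem_cone ψ x

lemma canonMap_append (ψ δ : S → List Bool) (x : CantorPow S) :
    canonMap (fun s => ψ s ++ δ s) x = canonMap ψ (canonMap δ x) := by
  funext s; simp [canonMap, prepend_append]

lemma twist_canonMap (γ : G) (δ : S → List Bool) (x : CantorPow S) :
    twist S γ (canonMap δ x) = canonMap (fun s => δ (γ⁻¹ • s)) (twist S γ x) := by
  funext s; simp [twist, canonMap]

lemma twist_twist (γ₁ γ₂ : G) (x : CantorPow S) :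
    twist S γ₁ (twist S γ₂ x) = twist S (γ₁ * γ₂) x := by
  funext s; simp [twist, mul_smul]

lemma twist_one (x : CantorPow S) : twist S (1 : G) x = x := by
  funext s; simp [twist]

lemma twistMap_canonMap (φ ψ : S → List Bool) (γ : G) (x : CantorPow S) :
    twistMap φ ψ γ (canonMap φ x) = canonMap ψ (twist S γ x) := by
  simp only [twistMap, Function.comp_apply, dropPrefix_canonMap]

lemma cone_append_subset (ψ δ : S → List Bool) :
    Cone (fun s => ψ s ++ δ s) ⊆ Cone ψ := by
  intro κ hκ
  rw [mem_cone_iff] at hκ ⊢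
  obtain ⟨x, rfl⟩ := hκ
  exact ⟨canonMap δ x, canonMap_append ψ δ x⟩

lemma twistMap_image_cone (φ ψ δ : S → List Bool) (γ : G) :
    twistMap φ ψ γ '' Cone (fun s => φ s ++ δ s) = Cone (fun s => ψ s ++ δ (γ⁻¹ • s)) := by
  ext κ
  constructor
  · rintro ⟨κ', hκ', rfl⟩
    rw [mem_cone_iff] at hκ'
    obtain ⟨x, rfl⟩ := hκ'
    rw [mem_cone_iff]
    rw [canonMap_append, twistMap_canonMap, twist_canonMap]
    exact ⟨twist S γ x, (canonMap_append _ _ _).symm⟩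
  · intro hκ
    rw [mem_cone_iff] at hκ
    obtain ⟨y, rfl⟩ := hκ
    refine ⟨canonMap (fun s => φ s ++ δ s) (twist S γ⁻¹ y), canonMap_mem_cone _ _, ?_⟩
    rw [canonMap_append, twistMap_canonMap, twist_canonMap, twist_twist]
    simp [canonMap_append, twist_one]

lemma twistMap_image_cone' (φ ψ : S → List Bool) (γ : G) :
    twistMap φ ψ γ '' Cone φ = Cone ψ := by
  have h := twistMap_image_cone φ ψ (fun _ => []) γ
  simpa using h

lemma twistMap_left_inv (φ ψ : S → List Bool) (γ : G) {κ : CantorPow S} (hκ : κ ∈ Cone φ) :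
    twistMap ψ φ γ⁻¹ (twistMap φ ψ γ κ) = κ := by
  rw [mem_cone_iff] at hκ
  obtain ⟨x, rfl⟩ := hκ
  rw [twistMap_canonMap, twistMap_canonMap, twist_twist]
  simp [twist_one]

lemma twistMap_comp (φg ψg φf ψf α β : S → List Bool) (γg γf : G)
    (hχ : ∀ s, ψg s ++ α s = φf s ++ β s)
    {κ : CantorPow S} (hκ : κ ∈ Cone (fun s => φg s ++ α (γg • s))) :
    twistMap φf ψf γf (twistMap φg ψg γg κ) =
      twistMap (fun s => φg s ++ α (γg • s)) (fun s => ψf s ++ β (γf⁻¹ • s)) (γf * γg) κ := by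
  rw [mem_cone_iff] at hκ
  obtain ⟨x, rfl⟩ := hκ
  rw [twistMap_canonMap]
  rw [canonMap_append, twistMap_canonMap, twist_canonMap]
  have e1 : (fun s => α (γg • γg⁻¹ • s)) = α := by funext s; rw [smul_inv_smul]
  rw [e1, ← canonMap_append]
  have e2 : (fun s => ψg s ++ α s) = fun s => φf s ++ β s := funext hχ
  rw [e2, canonMap_append, twistMap_canonMap, twist_canonMap, ← canonMap_append,
    twist_twist]
lemma cone_prefix {a b : S → List Bool} {κ : CantorPow S}
    (ha : κ ∈ Cone a) (hb : κ ∈ Cone b) (s : S) (h : (a s).length ≤ (b s).length) :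
    a s ++ (b s).drop (a s).length = b s := by
  conv_rhs => rw [← List.take_append_drop (a s).length (b s)]
  congr 1
  apply List.ext_getElem
  · rw [List.length_take]; omega
  · intro i h1 h2
    have hia : i < (a s).length := h1
    have e1 := ha s ⟨i, hia⟩
    have e2 := hb s ⟨i, by omega⟩
    simp only [List.get_eq_getElem] at e1 e2
    rw [List.getElem_take, ← e1, ← e2]

lemma cone_compat {a b : S → List Bool} {κ : CantorPow S}
    (ha : κ ∈ Cone a) (hb : κ ∈ Cone b) (s : S) :
    a s ++ (b s).drop (a s).length = b s ++ (a s).drop (b s).length := by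
  rcases le_total (a s).length (b s).length with h | h
  · rw [cone_prefix ha hb s h, List.drop_eq_nil_of_le h, List.append_nil]
  · rw [cone_prefix hb ha s h, List.drop_eq_nil_of_le h, List.append_nil]

lemma join_cases {a b : S → List Bool} {κ : CantorPow S}
    (ha : κ ∈ Cone a) (hb : κ ∈ Cone b) (s : S) :
    a s ++ (b s).drop (a s).length = a s ∨ a s ++ (b s).drop (a s).length = b s := by
  rcases le_total (a s).length (b s).length with h | h
  · right; exact cone_prefix ha hb s h
  · left; rw [List.drop_eq_nil_of_le h, List.append_nil]

lemma mem_cone_join {a b χ : S → List Bool} {κ' : CantorPow S}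
    (hcase : ∀ s, χ s = a s ∨ χ s = b s)
    (ha' : κ' ∈ Cone a) (hb' : κ' ∈ Cone b) :
    κ' ∈ Cone χ := by
  intro s i
  simp only [List.get_eq_getElem]
  rcases hcase s with h | h
  · have hi : (i : ℕ) < (a s).length := h ▸ i.isLt
    have := ha' s ⟨i, hi⟩
    simp only [List.get_eq_getElem] at this
    rw [this]
    congr 1
    exact h.symm
  · have hi : (i : ℕ) < (b s).length := h ▸ i.isLt
    have := hb' s ⟨i, hi⟩
    simp only [List.get_eq_getElem] at this
    rw [this]
    congr 1
    exact h.symm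

lemma partition_squeeze {ι X : Type*} {A B : ι → Set X}
    (hU : (⋃ i, A i) = Set.univ)
    (hB : Pairwise fun i j => Disjoint (B i) (B j))
    (hAB : ∀ i, A i ⊆ B i) : ∀ i, A i = B i := by
  intro i
  refine (hAB i).antisymm fun x hx => ?_
  have hx' : x ∈ ⋃ j, A j := hU ▸ Set.mem_univ x
  obtain ⟨j, hj⟩ := Set.mem_iUnion.mp hx'
  rcases eq_or_ne j i with rfl | hne
  · exact hj
  · exact (Set.disjoint_left.mp (hB hne) (hAB j hj) hx).elim
lemma canonMap_nilpre (x : CantorPow S) : canonMap (fun _ : S => ([] : List Bool)) x = x := by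
  funext s; exact prepend_nil (x s)

lemma member_image_cone {f : CantorPow S ≃ₜ CantorPow S} {n : ℕ}
    {φ ψ : Fin n → S → List Bool} {γ : Fin n → G}
    (hφ : IsConePartition φ) (hψ : IsConePartition ψ)
    (hE : ∀ i, Set.EqOn f (twistMap (φ i) (ψ i) (γ i)) (Cone (φ i))) :
    ∀ i, f '' Cone (φ i) = Cone (ψ i) := by
  apply partition_squeeze (A := fun i => f '' Cone (φ i)) (B := fun i => Cone (ψ i))
  · rw [← Set.image_iUnion, hφ.2.2, Set.image_univ, f.surjective.range_eq]
  · exact hψ.2.1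
  · intro i
    rw [Set.EqOn.image_eq (hE i), twistMap_image_cone']

lemma one_mem_aux : InTwistedBT G (1 : CantorPow S ≃ₜ CantorPow S) := by
  have hcone : Cone (fun _ : S => ([] : List Bool)) = Set.univ :=
    Set.eq_univ_of_forall fun κ s i => i.elim0
  have hpart : IsConePartition (fun _ : Fin 1 => fun _ : S => ([] : List Bool)) := by
    refine ⟨fun i => by simp [IsPrefixFun], ?_, ?_⟩
    · intro i j hij
      exact absurd (Subsingleton.elim i j) hij
    · simp only [hcone]
      exact Set.iUnion_const _
  refine ⟨1, _, _, fun _ => 1, hpart, hpart, fun i κ _ => ?_⟩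
  have hdp : dropPrefix (fun _ : S => ([] : List Bool)) κ = κ := by
    funext s nn; simp [dropPrefix]
  have h2 : twistMap (fun _ : S => ([] : List Bool)) (fun _ : S => ([] : List Bool))
      ((1 : G)) κ = κ := by
    simp only [twistMap, Function.comp_apply]
    rw [hdp, twist_one, canonMap_nilpre]
  exact h2.symm

lemma inv_mem_aux {f : CantorPow S ≃ₜ CantorPow S} (hf : InTwistedBT G f) :
    InTwistedBT G f⁻¹ := by
  obtain ⟨n, φ, ψ, γ, hφ, hψ, hE⟩ := hf
  have him := member_image_cone hφ hψ hE
  refine ⟨n, ψ, φ, fun i => (γ i)⁻¹, hψ, hφ, fun i κ hκ => ?_⟩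
  have hk : κ ∈ f '' Cone (φ i) := (him i) ▸ hκ
  obtain ⟨κ', hκ', rfl⟩ := hk
  have h2 : twistMap (ψ i) (φ i) (γ i)⁻¹ (f κ') = κ' := by
    rw [hE i hκ']; exact twistMap_left_inv _ _ _ hκ'
  rw [h2]
  exact f.symm_apply_apply κ'
lemma mul_mem_aux {f g : CantorPow S ≃ₜ CantorPow S}
    (hf : InTwistedBT G f) (hg : InTwistedBT G g) : InTwistedBT G (f * g) := by
  classical
  obtain ⟨m, φf, ψf, γf, hφf, hψf, hEf⟩ := hf
  obtain ⟨n, φg, ψg, γg, hφg, hψg, hEg⟩ := hg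
  have hgim := member_image_cone hφg hψg hEg
  let I := {p : Fin n × Fin m // (Cone (ψg p.1) ∩ Cone (φf p.2)).Nonempty}
  let α : I → S → List Bool := fun p s => (φf p.1.2 s).drop (ψg p.1.1 s).length
  let β : I → S → List Bool := fun p s => (ψg p.1.1 s).drop (φf p.1.2 s).length
  let χ : I → S → List Bool := fun p s => ψg p.1.1 s ++ α p s
  have hχeq2 : ∀ p : I, ∀ s, ψg p.1.1 s ++ α p s = φf p.1.2 s ++ β p s := by
    intro p s
    obtain ⟨κ, hκ1, hκ2⟩ := p.2
    exact cone_compat hκ1 hκ2 s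
  have hχcases : ∀ p : I, ∀ s, χ p s = ψg p.1.1 s ∨ χ p s = φf p.1.2 s := by
    intro p s
    obtain ⟨κ, hκ1, hκ2⟩ := p.2
    exact join_cases hκ1 hκ2 s
  have hχsub1 : ∀ p : I, Cone (χ p) ⊆ Cone (ψg p.1.1) := fun p => cone_append_subset _ _
  have hχsub2 : ∀ p : I, Cone (χ p) ⊆ Cone (φf p.1.2) := by
    intro p
    have hfun : χ p = fun s => φf p.1.2 s ++ β p s := funext fun s => hχeq2 p s
    rw [show Cone (χ p) = Cone (fun s => φf p.1.2 s ++ β p s) from hfun ▸ rfl]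
    exact cone_append_subset _ _
  have hχdisj : Pairwise fun p q : I => Disjoint (Cone (χ p)) (Cone (χ q)) := by
    intro p q hpq
    rcases (show p.1.1 ≠ q.1.1 ∨ p.1.2 ≠ q.1.2 by
      by_contra h
      push_neg at h
      exact hpq (Subtype.ext (Prod.ext h.1 h.2))) with h | h
    · exact (hψg.2.1 h).mono (hχsub1 p) (hχsub1 q)
    · exact (hφf.2.1 h).mono (hχsub2 p) (hχsub2 q)
  have hχcover : (⋃ p : I, Cone (χ p)) = Set.univ := by
    apply Set.eq_univ_of_forall
    intro κ
    have h1 : κ ∈ ⋃ i, Cone (ψg i) := hψg.2.2 ▸ Set.mem_univ κ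
    have h2 : κ ∈ ⋃ j, Cone (φf j) := hφf.2.2 ▸ Set.mem_univ κ
    obtain ⟨i, hi⟩ := Set.mem_iUnion.mp h1
    obtain ⟨j, hj⟩ := Set.mem_iUnion.mp h2
    exact Set.mem_iUnion.mpr ⟨⟨(i, j), ⟨κ, hi, hj⟩⟩,
      mem_cone_join (hχcases ⟨(i, j), ⟨κ, hi, hj⟩⟩) hi hj⟩
  let Φ : I → S → List Bool := fun p s => φg p.1.1 s ++ α p (γg p.1.1 • s)
  let Ψ : I → S → List Bool := fun p s => ψf p.1.2 s ++ β p ((γf p.1.2)⁻¹ • s)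
  let Γ : I → G := fun p => γf p.1.2 * γg p.1.1
  have hgΦ : ∀ p : I, g '' Cone (Φ p) = Cone (χ p) := by
    intro p
    have hsub : Cone (Φ p) ⊆ Cone (φg p.1.1) := cone_append_subset _ _
    rw [Set.EqOn.image_eq ((hEg p.1.1).mono hsub)]
    have h2 := twistMap_image_cone (φg p.1.1) (ψg p.1.1)
      (fun s => α p (γg p.1.1 • s)) (γg p.1.1)
    rw [show Cone (Φ p) = Cone (fun s => φg p.1.1 s ++ α p (γg p.1.1 • s)) from rfl, h2]
    have hfun : (fun s => ψg p.1.1 s ++ α p (γg p.1.1 • (γg p.1.1)⁻¹ • s)) = χ p := by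
      funext s; rw [smul_inv_smul]
    rw [hfun]
  have hfχ : ∀ p : I, f '' Cone (χ p) = Cone (Ψ p) := by
    intro p
    have hfun : χ p = fun s => φf p.1.2 s ++ β p s := funext fun s => hχeq2 p s
    have hcχ : Cone (χ p) = Cone (fun s => φf p.1.2 s ++ β p s) := hfun ▸ rfl
    rw [Set.EqOn.image_eq ((hEf p.1.2).mono (hχsub2 p)), hcχ,
      twistMap_image_cone (φf p.1.2) (ψf p.1.2) (β p) (γf p.1.2)]
  have hΦdisj : Pairwise fun p q : I => Disjoint (Cone (Φ p)) (Cone (Φ q)) := by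
    intro p q hpq
    have hd : Disjoint (Cone (χ p)) (Cone (χ q)) := hχdisj hpq
    rw [← hgΦ p, ← hgΦ q] at hd
    exact (Set.disjoint_image_iff g.injective).mp hd
  have hΦcover : (⋃ p : I, Cone (Φ p)) = Set.univ := by
    apply Set.image_injective.mpr g.injective
    rw [Set.image_iUnion, Set.image_univ, g.surjective.range_eq]
    rw [Set.iUnion_congr hgΦ]
    exact hχcover
  have hΨdisj : Pairwise fun p q : I => Disjoint (Cone (Ψ p)) (Cone (Ψ q)) := by
    intro p q hpq
    rw [← hfχ p, ← hfχ q]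
    exact (Set.disjoint_image_iff f.injective).mpr (hχdisj hpq)
  have hΨcover : (⋃ p : I, Cone (Ψ p)) = Set.univ := by
    rw [← Set.iUnion_congr hfχ, ← Set.image_iUnion, hχcover, Set.image_univ,
      f.surjective.range_eq]
  have hΦpre : ∀ p : I, IsPrefixFun (Φ p) := by
    intro p
    have hfin : ((fun s : S => γg p.1.1 • s) ⁻¹' {t | φf p.1.2 t ≠ []}).Finite :=
      Set.Finite.preimage (MulAction.injective (γg p.1.1)).injOn (hφf.1 p.1.2)
    apply Set.Finite.subset ((hφg.1 p.1.1).union hfin)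
    intro s hs
    simp only [Set.mem_union, Set.mem_preimage, Set.mem_setOf_eq]
    by_contra hc
    push_neg at hc
    apply hs
    show φg p.1.1 s ++ α p (γg p.1.1 • s) = []
    rw [hc.1, List.nil_append]
    show (φf p.1.2 (γg p.1.1 • s)).drop _ = []
    rw [hc.2]
    simp
  have hΨpre : ∀ p : I, IsPrefixFun (Ψ p) := by
    intro p
    have hfin : ((fun s : S => (γf p.1.2)⁻¹ • s) ⁻¹' {t | ψg p.1.1 t ≠ []}).Finite :=
      Set.Finite.preimage (MulAction.injective (γf p.1.2)⁻¹).injOn (hψg.1 p.1.1)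
    apply Set.Finite.subset ((hψf.1 p.1.2).union hfin)
    intro s hs
    simp only [Set.mem_union, Set.mem_preimage, Set.mem_setOf_eq]
    by_contra hc
    push_neg at hc
    apply hs
    show ψf p.1.2 s ++ β p ((γf p.1.2)⁻¹ • s) = []
    rw [hc.1, List.nil_append]
    show (ψg p.1.1 ((γf p.1.2)⁻¹ • s)).drop _ = []
    rw [hc.2]
    simp
  have hEq : ∀ p : I, Set.EqOn (⇑(f * g)) (twistMap (Φ p) (Ψ p) (Γ p)) (Cone (Φ p)) := by
    intro p κ hκ
    have hκg : κ ∈ Cone (φg p.1.1) := cone_append_subset _ _ hκ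
    have hgκ : g κ ∈ Cone (χ p) := (hgΦ p) ▸ Set.mem_image_of_mem g hκ
    have hgκ2 : g κ ∈ Cone (φf p.1.2) := hχsub2 p hgκ
    have e1 : (f * g) κ = f (g κ) := rfl
    rw [e1, hEf p.1.2 hgκ2, hEg p.1.1 hκg]
    exact twistMap_comp _ _ _ _ (α p) (β p) (γg p.1.1) (γf p.1.2) (hχeq2 p) hκ
  have : Fintype I := Subtype.fintype _
  let k := Fintype.card I
  let e : Fin k ≃ I := (Fintype.equivFin I).symm
  refine ⟨k, fun i => Φ (e i), fun i => Ψ (e i), fun i => Γ (e i),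
    ⟨fun i => hΦpre (e i), ?_, ?_⟩, ⟨fun i => hΨpre (e i), ?_, ?_⟩, fun i => hEq (e i)⟩
  · exact fun i j hij => hΦdisj fun h => hij (e.injective h)
  · rw [Function.Surjective.iUnion_comp e.surjective fun p => Cone (Φ p)]
    exact hΦcover
  · exact fun i j hij => hΨdisj fun h => hij (e.injective h)
  · rw [Function.Surjective.iUnion_comp e.surjective fun p => Cone (Ψ p)]
    exact hΨcover
end TwistAux
/-- The set `SV_G` of all homeomorphisms of `𝔠^S` that are piecewise
twist homeomorphisms (with respect to finite cone partitions) is a subgroup of the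
group of homeomorphisms of `𝔠^S`: it contains the identity and is closed under
composition and inversion. -/
theorem stmt5 (G S : Type*) [Group G] [MulAction G S] [FaithfulSMul G S] :
    InTwistedBT G (1 : CantorPow S ≃ₜ CantorPow S) ∧
    (∀ f g : CantorPow S ≃ₜ CantorPow S,
      InTwistedBT G f → InTwistedBT G g → InTwistedBT G (f * g)) ∧
    (∀ f : CantorPow S ≃ₜ CantorPow S, InTwistedBT G f → InTwistedBT G f⁻¹) ∧
    ∃ H : Subgroup (CantorPow S ≃ₜ CantorPow S),
      (H : Set (CantorPow S ≃ₜ CantorPow S)) = {f | InTwistedBT G f} := by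
  exact ⟨one_mem_aux, fun f g hf hg => mul_mem_aux hf hg, fun f hf => inv_mem_aux hf,
    ⟨{ carrier := {f | InTwistedBT G f},
       one_mem' := one_mem_aux,
       mul_mem' := fun hf hg => mul_mem_aux hf hg,
       inv_mem' := fun hf => inv_mem_aux hf }, rfl⟩⟩
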